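/- (Theorem 2.1(2) and Corollary 2.1(2), real part) Let (u₁,u₂,u₃,u₁*,u₂*,u₃*,k₁,k₂,k₁*,k₂*) be a closed dual timelike Frenet frame of period T, let d, d* be the Steiner vectors at t₀, let φ, φ* ∈ ℝ, and let (v₁,v₂,v₃,v₁*,v₂*,v₃*) be the parallel frame with curvature data p, p*, q, q*. Then the real angle of pitch of the closed ruled surface generated by (v₁,v₁*) is λ_{V₁} = -⟨d, v₁(t₀)⟩ = -∮q = cosh φ·λ_{u₁} + sinh φ·λ_{u₃}. -/

import Mathlib

noncomputable section

/-- The Lorentzian inner product on `ℝ³`: `⟨a,b⟩ = -a₁b₁ + a₂b₂ + a₃b₃`. -/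
def lin (a b : Fin 3 → ℝ) : ℝ := -(a 0 * b 0) + a 1 * b 1 + a 2 * b 2

/-- A closed dual timelike Frenet frame of period `T > 0`: differentiable `T`-periodic
frame maps `u₁,u₂,u₃` with dual parts `u₁s,u₂s,u₃s`, continuous `T`-periodic curvature
data `k₁,k₂,k₁s,k₂s`, Lorentzian orthonormality (with `u₁` timelike), the dual unit
conditions `⟨uᵢ,uⱼ*⟩ + ⟨uᵢ*,uⱼ⟩ = 0`, and the (dual) Frenet equations. -/
structure DualFrenetFrame (T : ℝ) where
  u₁ : ℝ → Fin 3 → ℝ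
  u₂ : ℝ → Fin 3 → ℝ
  u₃ : ℝ → Fin 3 → ℝ
  u₁s : ℝ → Fin 3 → ℝ
  u₂s : ℝ → Fin 3 → ℝ
  u₃s : ℝ → Fin 3 → ℝ
  k₁ : ℝ → ℝ
  k₂ : ℝ → ℝ
  k₁s : ℝ → ℝ
  k₂s : ℝ → ℝ
  hT : 0 < T
  diff_u₁ : Differentiable ℝ u₁
  diff_u₂ : Differentiable ℝ u₂
  diff_u₃ : Differentiable ℝ u₃
  diff_u₁s : Differentiable ℝ u₁s
  diff_u₂s : Differentiable ℝ u₂s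
  diff_u₃s : Differentiable ℝ u₃s
  cont_k₁ : Continuous k₁
  cont_k₂ : Continuous k₂
  cont_k₁s : Continuous k₁s
  cont_k₂s : Continuous k₂s
  per_u₁ : Function.Periodic u₁ T
  per_u₂ : Function.Periodic u₂ T
  per_u₃ : Function.Periodic u₃ T
  per_u₁s : Function.Periodic u₁s T
  per_u₂s : Function.Periodic u₂s T
  per_u₃s : Function.Periodic u₃s T
  per_k₁ : Function.Periodic k₁ T
  per_k₂ : Function.Periodic k₂ T
  per_k₁s : Function.Periodic k₁s T
  per_k₂s : Function.Periodic k₂s T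
  h₁₁ : ∀ t, lin (u₁ t) (u₁ t) = -1
  h₂₂ : ∀ t, lin (u₂ t) (u₂ t) = 1
  h₃₃ : ∀ t, lin (u₃ t) (u₃ t) = 1
  h₁₂ : ∀ t, lin (u₁ t) (u₂ t) = 0
  h₁₃ : ∀ t, lin (u₁ t) (u₃ t) = 0
  h₂₃ : ∀ t, lin (u₂ t) (u₃ t) = 0
  hd₁₁ : ∀ t, lin (u₁ t) (u₁s t) + lin (u₁s t) (u₁ t) = 0
  hd₁₂ : ∀ t, lin (u₁ t) (u₂s t) + lin (u₁s t) (u₂ t) = 0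
  hd₁₃ : ∀ t, lin (u₁ t) (u₃s t) + lin (u₁s t) (u₃ t) = 0
  hd₂₁ : ∀ t, lin (u₂ t) (u₁s t) + lin (u₂s t) (u₁ t) = 0
  hd₂₂ : ∀ t, lin (u₂ t) (u₂s t) + lin (u₂s t) (u₂ t) = 0
  hd₂₃ : ∀ t, lin (u₂ t) (u₃s t) + lin (u₂s t) (u₃ t) = 0
  hd₃₁ : ∀ t, lin (u₃ t) (u₁s t) + lin (u₃s t) (u₁ t) = 0
  hd₃₂ : ∀ t, lin (u₃ t) (u₂s t) + lin (u₃s t) (u₂ t) = 0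
  hd₃₃ : ∀ t, lin (u₃ t) (u₃s t) + lin (u₃s t) (u₃ t) = 0
  frenet₁ : ∀ t, deriv u₁ t = k₁ t • u₂ t
  frenet₂ : ∀ t, deriv u₂ t = k₁ t • u₁ t - k₂ t • u₃ t
  frenet₃ : ∀ t, deriv u₃ t = k₂ t • u₂ t
  frenet₁s : ∀ t, deriv u₁s t = k₁s t • u₂ t + k₁ t • u₂s t
  frenet₂s : ∀ t, deriv u₂s t =
    k₁s t • u₁ t - k₂s t • u₃ t + k₁ t • u₁s t - k₂ t • u₃s t
  frenet₃s : ∀ t, deriv u₃s t = k₂s t • u₂ t + k₂ t • u₂s t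

/-- `∮ f = ∫₀ᵀ f(t) dt`. -/
def oint (T : ℝ) (f : ℝ → ℝ) : ℝ := ∫ t in (0:ℝ)..T, f t

/-- The real Steiner vector `d` at `t₀`. -/
def dvec {T : ℝ} (F : DualFrenetFrame T) (t₀ : ℝ) : Fin 3 → ℝ :=
  oint T F.k₂ • F.u₁ t₀ - oint T F.k₁ • F.u₃ t₀

/-- The dual Steiner vector `d*` at `t₀`. -/
def dvecs {T : ℝ} (F : DualFrenetFrame T) (t₀ : ℝ) : Fin 3 → ℝ :=
  oint T F.k₂ • F.u₁s t₀ + oint T F.k₂s • F.u₁ t₀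
    - oint T F.k₁ • F.u₃s t₀ - oint T F.k₁s • F.u₃ t₀

/-- Real part of the parallel frame vector `v₁ = cosh φ · u₁ + sinh φ · u₃`. -/
def pv₁ {T : ℝ} (F : DualFrenetFrame T) (φ : ℝ) : ℝ → Fin 3 → ℝ :=
  fun t => Real.cosh φ • F.u₁ t + Real.sinh φ • F.u₃ t

/-- Real part of the parallel frame vector `v₂ = u₂`. -/
def pv₂ {T : ℝ} (F : DualFrenetFrame T) : ℝ → Fin 3 → ℝ := F.u₂

/-- Real part of the parallel frame vector `v₃ = -sinh φ · u₁ - cosh φ · u₃`. -/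
def pv₃ {T : ℝ} (F : DualFrenetFrame T) (φ : ℝ) : ℝ → Fin 3 → ℝ :=
  fun t => -(Real.sinh φ • F.u₁ t) - Real.cosh φ • F.u₃ t

/-- Dual part `v₁*` of the parallel frame. -/
def pv₁s {T : ℝ} (F : DualFrenetFrame T) (φ φs : ℝ) : ℝ → Fin 3 → ℝ :=
  fun t => Real.cosh φ • F.u₁s t + Real.sinh φ • F.u₃s t
    + φs • (Real.sinh φ • F.u₁ t + Real.cosh φ • F.u₃ t)

/-- Dual part `v₂* = u₂*` of the parallel frame. -/
def pv₂s {T : ℝ} (F : DualFrenetFrame T) : ℝ → Fin 3 → ℝ := F.u₂s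

/-- Dual part `v₃*` of the parallel frame. -/
def pv₃s {T : ℝ} (F : DualFrenetFrame T) (φ φs : ℝ) : ℝ → Fin 3 → ℝ :=
  fun t => -(Real.sinh φ • F.u₁s t) - Real.cosh φ • F.u₃s t
    - φs • (Real.cosh φ • F.u₁ t + Real.sinh φ • F.u₃ t)

/-- Curvature `p = k₁ cosh φ + k₂ sinh φ` of the parallel frame. -/
def pp {T : ℝ} (F : DualFrenetFrame T) (φ : ℝ) : ℝ → ℝ :=
  fun t => F.k₁ t * Real.cosh φ + F.k₂ t * Real.sinh φ

/-- Dual curvature `p*` of the parallel frame. -/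
def pps {T : ℝ} (F : DualFrenetFrame T) (φ φs : ℝ) : ℝ → ℝ :=
  fun t => F.k₁s t * Real.cosh φ + F.k₂s t * Real.sinh φ
    + φs * (F.k₁ t * Real.sinh φ + F.k₂ t * Real.cosh φ)

/-- Torsion `q = -k₁ sinh φ - k₂ cosh φ` of the parallel frame. -/
def pq {T : ℝ} (F : DualFrenetFrame T) (φ : ℝ) : ℝ → ℝ :=
  fun t => -(F.k₁ t * Real.sinh φ) - F.k₂ t * Real.cosh φ

/-- Dual torsion `q*` of the parallel frame. -/
def pqs {T : ℝ} (F : DualFrenetFrame T) (φ φs : ℝ) : ℝ → ℝ :=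
  fun t => -(F.k₁s t * Real.sinh φ) - F.k₂s t * Real.cosh φ
    - φs * (F.k₁ t * Real.cosh φ + F.k₂ t * Real.sinh φ)

/-- Theorem 2.1(2) and Corollary 2.1(2), real part: the real angle of pitch of the
ruled surface generated by `(v₁,v₁*)` is `-∮q = cosh φ·λ_{u₁} + sinh φ·λ_{u₃}`. -/
theorem angle_of_pitch_v₁ {T : ℝ} (F : DualFrenetFrame T) (t₀ φ φs : ℝ) :
    -lin (dvec F t₀) (pv₁ F φ t₀) = -oint T (pq F φ) ∧
    -oint T (pq F φ)
      = Real.cosh φ * oint T F.k₂ + Real.sinh φ * oint T F.k₁ := by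
  have hq : oint T (pq F φ)
      = (-Real.sinh φ) * oint T F.k₁ + (-Real.cosh φ) * oint T F.k₂ := by
    unfold oint pq
    rw [← intervalIntegral.integral_const_mul, ← intervalIntegral.integral_const_mul,
      ← intervalIntegral.integral_add (f := fun x => -Real.sinh φ * F.k₁ x)
        (g := fun x => -Real.cosh φ * F.k₂ x)
        ((continuous_const.mul F.cont_k₁).intervalIntegrable _ _)
        ((continuous_const.mul F.cont_k₂).intervalIntegrable _ _)]
    congr 1; ext t; ring
  constructor
  · have h11 := F.h₁₁ t₀
    have h13 := F.h₁₃ t₀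
    have h33 := F.h₃₃ t₀
    simp only [lin, dvec, pv₁, Pi.add_apply, Pi.sub_apply, Pi.smul_apply,
      smul_eq_mul] at *
    rw [hq]; ring_nf
    linear_combination (-(Real.cosh φ) * oint T F.k₂) * h11
      + (Real.sinh φ * oint T F.k₁) * h33
      + (Real.cosh φ * oint T F.k₁ - Real.sinh φ * oint T F.k₂) * h13
  · rw [hq]; ring
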